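/- Let X, Y be metric spaces, F : X ⇒ Y a set-valued map, and (x̄, ȳ) ∈ Graph F. Then F is metrically regular around (x̄, ȳ) with constant L > 0 if and only if F⁻¹ : Y ⇒ X has the Aubin property around (ȳ, x̄) with constant L, i.e., there exist neighborhoods V of ȳ, U of x̄ such that for all y, v ∈ V, e(F⁻¹(y) ∩ U, F⁻¹(v)) ≤ L d(y, v), where e(A,B) := sup_{a∈A} d(a,B) is the excess. -/

import Mathlib

open Metric Set Filter Topology ENNReal

noncomputable def exc {α : Type*} [PseudoEMetricSpace α] (A B : Set α) : ℝ≥0∞ :=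
  ⨆ a ∈ A, EMetric.infEdist a B

theorem stmt1 {X Y : Type*} [MetricSpace X] [MetricSpace Y]
    (F : X → Set Y) (x₀ : X) (y₀ : Y) (hxy : y₀ ∈ F x₀) (L : ℝ) (hL : 0 < L) :
    (∃ U ∈ 𝓝 x₀, ∃ V ∈ 𝓝 y₀, ∀ x ∈ U, ∀ y ∈ V,
      EMetric.infEdist x {x' | y ∈ F x'} ≤
        ENNReal.ofReal L * EMetric.infEdist y (F x)) ↔
    (∃ V ∈ 𝓝 y₀, ∃ U ∈ 𝓝 x₀, ∀ y ∈ V, ∀ v ∈ V,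
      exc ({x' | y ∈ F x'} ∩ U) {x' | v ∈ F x'} ≤ ENNReal.ofReal (L * dist y v)) := by
  constructor
  · rintro ⟨U, hU, V, hV, hreg⟩
    refine ⟨V, hV, U, hU, fun y hy v hv => ?_⟩
    refine iSup₂_le fun x hx => ?_
    obtain ⟨hxy', hxU⟩ := hx
    calc EMetric.infEdist x {x' | v ∈ F x'}
        ≤ ENNReal.ofReal L * EMetric.infEdist v (F x) := hreg x hxU v hv
      _ ≤ ENNReal.ofReal L * edist v y := by
          gcongr
          exact EMetric.infEdist_le_edist_of_mem hxy'
      _ = ENNReal.ofReal (L * dist y v) := by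
          rw [edist_dist, ← ENNReal.ofReal_mul hL.le, dist_comm]
  · rintro ⟨V, hV, U, hU, haub⟩
    obtain ⟨ρ, hρ, hρV⟩ := Metric.mem_nhds_iff.mp hV
    obtain ⟨σ, hσ, hσU⟩ := Metric.mem_nhds_iff.mp hU
    have hy₀V : y₀ ∈ V := mem_of_mem_nhds hV
    have hx₀U : x₀ ∈ U := mem_of_mem_nhds hU
    refine ⟨ball x₀ (min σ (L * ρ / 6)), ball_mem_nhds _ (lt_min hσ (by positivity)),
      ball y₀ (ρ / 6), ball_mem_nhds _ (by positivity), fun x hx y hy => ?_⟩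
    have hxx₀ : dist x x₀ < min σ (L * ρ / 6) := mem_ball.mp hx
    have hyy₀ : dist y y₀ < ρ / 6 := mem_ball.mp hy
    have hxU : x ∈ U := hσU (mem_ball.mpr (lt_of_lt_of_le hxx₀ (min_le_left _ _)))
    have hyV : y ∈ V := hρV (mem_ball.mpr (by linarith))
    -- point-to-set form of the Aubin estimate
    have key : ∀ w ∈ V, ∀ v ∈ V, ∀ z, v ∈ F z → z ∈ U →
        EMetric.infEdist z {x' | w ∈ F x'} ≤ ENNReal.ofReal (L * dist v w) := by
      intro w hw v hv z hz hzU
      refine le_trans ?_ (haub v hv w hw)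
      exact le_iSup₂_of_le z ⟨hz, hzU⟩ le_rfl
    by_cases hcase : ENNReal.ofReal (ρ / 2) ≤ EMetric.infEdist y (F x)
    · -- F x is far from y; use the bound through x₀
      calc EMetric.infEdist x {x' | y ∈ F x'}
          ≤ edist x x₀ + EMetric.infEdist x₀ {x' | y ∈ F x'} :=
            EMetric.infEdist_le_edist_add_infEdist
        _ ≤ ENNReal.ofReal (L * ρ / 6) + ENNReal.ofReal (L * dist y₀ y) := by
            gcongr
            · rw [edist_dist]
              exact ENNReal.ofReal_le_ofReal (le_of_lt (lt_of_lt_of_le hxx₀ (min_le_right _ _)))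
            · exact key y hyV y₀ hy₀V x₀ hxy hx₀U
        _ ≤ ENNReal.ofReal (L * (ρ / 2)) := by
            rw [← ENNReal.ofReal_add (by positivity) (by positivity)]
            apply ENNReal.ofReal_le_ofReal
            have : dist y₀ y < ρ / 6 := by rw [dist_comm]; exact hyy₀
            nlinarith
        _ = ENNReal.ofReal L * ENNReal.ofReal (ρ / 2) := ENNReal.ofReal_mul hL.le
        _ ≤ ENNReal.ofReal L * EMetric.infEdist y (F x) := by gcongr
    · push_neg at hcase
      refine ENNReal.le_of_forall_pos_le_add fun ε hε hfin => ?_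
      set δ : ℝ := min (ρ / 6) (ε / L) with hδdef
      have hεpos : (0 : ℝ) < ε := hε
      have hδ : 0 < δ := lt_min (by positivity) (by positivity)
      have h1 : EMetric.infEdist y (F x) <
          EMetric.infEdist y (F x) + ENNReal.ofReal δ :=
        ENNReal.lt_add_right (hcase.trans_le le_top).ne (ENNReal.ofReal_pos.mpr hδ).ne'
      obtain ⟨w, hwF, hwlt⟩ := EMetric.infEdist_lt_iff.mp h1
      have hwlt2 : edist y w < ENNReal.ofReal (ρ / 2 + δ) := by
        rw [ENNReal.ofReal_add (by positivity) hδ.le]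
        exact hwlt.trans_le (add_le_add hcase.le le_rfl)
      have hdyw : dist y w < ρ / 2 + δ := edist_lt_ofReal.mp hwlt2
      have hδle : δ ≤ ρ / 6 := min_le_left _ _
      have hwV : w ∈ V := by
        apply hρV
        rw [mem_ball]
        have : dist w y₀ ≤ dist w y + dist y y₀ := dist_triangle _ _ _
        rw [dist_comm w y] at this
        linarith
      calc EMetric.infEdist x {x' | y ∈ F x'}
          ≤ ENNReal.ofReal (L * dist w y) := key y hyV w hwV x hwF hxU
        _ = ENNReal.ofReal L * edist y w := by
            rw [ENNReal.ofReal_mul hL.le, edist_dist, dist_comm]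
        _ ≤ ENNReal.ofReal L * (EMetric.infEdist y (F x) + ENNReal.ofReal δ) := by
            gcongr
        _ = ENNReal.ofReal L * EMetric.infEdist y (F x) + ENNReal.ofReal (L * δ) := by
            rw [mul_add, ENNReal.ofReal_mul hL.le]
        _ ≤ ENNReal.ofReal L * EMetric.infEdist y (F x) + ε := by
            gcongr
            calc ENNReal.ofReal (L * δ) ≤ ENNReal.ofReal (L * (ε / L)) := by
                  apply ENNReal.ofReal_le_ofReal
                  exact mul_le_mul_of_nonneg_left (min_le_right _ _) hL.le
              _ = ENNReal.ofReal (ε : ℝ) := by rw [mul_div_cancel₀ _ hL.ne']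
              _ = (ε : ℝ≥0∞) := ENNReal.ofReal_coe_nnreal
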